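/- Let K, Δ₂, K_Z be real symmetric positive definite p×p matrices with Δ₂ ⪯ K (i.e., Δ₂⁻¹ = K⁻¹ + B₂ for some positive semidefinite B₂), let γ ∈ (0,1), and let M₂ be a real symmetric positive semidefinite matrix with B₂·M₂ = 0 where B₂ = Δ₂⁻¹ − K⁻¹. Then tr( M₂·( (I + Δ₂⁻¹K_Z)·((1−γ)K + γΔ₂ + K_Z)⁻¹·(I + K_ZΔ₂⁻¹) − Δ₂⁻¹(Δ₂+K_Z)Δ₂⁻¹ ) ) = (1−γ)·tr( M₂·(I + Δ₂⁻¹K_Z)·((1−γ)K + γΔ₂ + K_Z)⁻¹·K⁻¹·B₂ ) = 0. -/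

import Mathlib

open Matrix

lemma smul_posDef {p : ℕ} {M : Matrix (Fin p) (Fin p) ℝ} (hM : M.PosDef)
    {c : ℝ} (hc : 0 < c) : (c • M).PosDef := by
  have hH : (c • M).IsHermitian := by
    have h := hM.1
    show (c • M)ᴴ = c • M
    rw [conjTranspose_smul, h]
    norm_num
  refine ⟨hH, fun x hx => ?_⟩
  exact (hM.smul hc).2 hx

theorem stmt17 (p : ℕ) (K Δ₂ KZ M₂ B₂ : Matrix (Fin p) (Fin p) ℝ)
    (hK : K.PosDef) (hΔ₂ : Δ₂.PosDef) (hKZ : KZ.PosDef)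
    (hB₂ : B₂ = Δ₂⁻¹ - K⁻¹) (hB₂psd : B₂.PosSemidef)
    (hM₂ : M₂.PosSemidef) (hB₂M₂ : B₂ * M₂ = 0)
    (γ : ℝ) (hγ0 : 0 < γ) (hγ1 : γ < 1) :
    (M₂ * ((1 + Δ₂⁻¹ * KZ) * ((1 - γ) • K + γ • Δ₂ + KZ)⁻¹ * (1 + KZ * Δ₂⁻¹) -
        Δ₂⁻¹ * (Δ₂ + KZ) * Δ₂⁻¹)).trace =
      (1 - γ) * (M₂ * (1 + Δ₂⁻¹ * KZ) * ((1 - γ) • K + γ • Δ₂ + KZ)⁻¹ * K⁻¹ * B₂).trace ∧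
    (1 - γ) * (M₂ * (1 + Δ₂⁻¹ * KZ) * ((1 - γ) • K + γ • Δ₂ + KZ)⁻¹ * K⁻¹ * B₂).trace = 0 := by
  have hγ' : (0:ℝ) < 1 - γ := by linarith
  set S : Matrix (Fin p) (Fin p) ℝ := (1 - γ) • K + γ • Δ₂ + KZ with hSdef
  have hSpd : S.PosDef :=
    (((smul_posDef hK hγ').add (smul_posDef hΔ₂ hγ0)).add hKZ)
  -- inverse facts
  have hSinv : S⁻¹ * S = 1 := Matrix.nonsing_inv_mul _ hSpd.det_pos.ne'.isUnit
  have hΔinv : Δ₂ * Δ₂⁻¹ = 1 := Matrix.mul_nonsing_inv _ hΔ₂.det_pos.ne'.isUnit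
  have hKinv : K * K⁻¹ = 1 := Matrix.mul_nonsing_inv _ hK.det_pos.ne'.isUnit
  -- trace of anything of the form M₂ * C * B₂ is zero
  have key : ∀ C : Matrix (Fin p) (Fin p) ℝ, (M₂ * C * B₂).trace = 0 := by
    intro C
    rw [Matrix.trace_mul_comm, ← mul_assoc, hB₂M₂, zero_mul, trace_zero]
  -- the key matrix algebra identity
  have hfact : (1 + Δ₂⁻¹ * KZ) * S⁻¹ * (1 + KZ * Δ₂⁻¹) - Δ₂⁻¹ * (Δ₂ + KZ) * Δ₂⁻¹
      = (-(1 - γ)) • ((1 + Δ₂⁻¹ * KZ) * S⁻¹ * (K * B₂)) := by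
    have h1 : Δ₂⁻¹ * (Δ₂ + KZ) * Δ₂⁻¹ = (1 + Δ₂⁻¹ * KZ) * S⁻¹ * (S * Δ₂⁻¹) := by
      have : (1 + Δ₂⁻¹ * KZ) * S⁻¹ * (S * Δ₂⁻¹)
          = (1 + Δ₂⁻¹ * KZ) * (S⁻¹ * S) * Δ₂⁻¹ := by
        simp only [mul_assoc]
      rw [this, hSinv, mul_one]
      have h2 : Δ₂⁻¹ * Δ₂ = 1 := Matrix.nonsing_inv_mul _ hΔ₂.det_pos.ne'.isUnit
      rw [mul_add, h2]
    rw [h1]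
    have h3 : (1 + KZ * Δ₂⁻¹) - S * Δ₂⁻¹ = (-(1 - γ)) • (K * B₂) := by
      have e1 : K * B₂ = K * Δ₂⁻¹ - 1 := by rw [hB₂, mul_sub, hKinv]
      have e2 : S * Δ₂⁻¹
          = (1 - γ) • (K * Δ₂⁻¹) + γ • (1 : Matrix (Fin p) (Fin p) ℝ) + KZ * Δ₂⁻¹ := by
        rw [hSdef, add_mul, add_mul, Matrix.smul_mul, Matrix.smul_mul, hΔinv]
      rw [e1, e2]
      module
    calc (1 + Δ₂⁻¹ * KZ) * S⁻¹ * (1 + KZ * Δ₂⁻¹) - (1 + Δ₂⁻¹ * KZ) * S⁻¹ * (S * Δ₂⁻¹)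
        = (1 + Δ₂⁻¹ * KZ) * S⁻¹ * ((1 + KZ * Δ₂⁻¹) - S * Δ₂⁻¹) := by
          rw [mul_sub]
      _ = (1 + Δ₂⁻¹ * KZ) * S⁻¹ * ((-(1 - γ)) • (K * B₂)) := by rw [h3]
      _ = (-(1 - γ)) • ((1 + Δ₂⁻¹ * KZ) * S⁻¹ * (K * B₂)) := by
          rw [Matrix.mul_smul]
  constructor
  · rw [hfact]
    have hL : (M₂ * ((-(1 - γ)) • ((1 + Δ₂⁻¹ * KZ) * S⁻¹ * (K * B₂)))).trace = 0 := by
      rw [Matrix.mul_smul, trace_smul, smul_eq_mul]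
      have : (M₂ * ((1 + Δ₂⁻¹ * KZ) * S⁻¹ * (K * B₂))).trace
          = (M₂ * ((1 + Δ₂⁻¹ * KZ) * S⁻¹ * K) * B₂).trace := by
        simp only [mul_assoc]
      rw [this, key, mul_zero]
    rw [hL]
    have hR : (M₂ * (1 + Δ₂⁻¹ * KZ) * S⁻¹ * K⁻¹ * B₂).trace = 0 := by
      have : M₂ * (1 + Δ₂⁻¹ * KZ) * S⁻¹ * K⁻¹ * B₂
          = M₂ * ((1 + Δ₂⁻¹ * KZ) * S⁻¹ * K⁻¹) * B₂ := by
        simp only [mul_assoc]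
      rw [this, key]
    rw [hR, mul_zero]
  · have hR : (M₂ * (1 + Δ₂⁻¹ * KZ) * S⁻¹ * K⁻¹ * B₂).trace = 0 := by
      have : M₂ * (1 + Δ₂⁻¹ * KZ) * S⁻¹ * K⁻¹ * B₂
          = M₂ * ((1 + Δ₂⁻¹ * KZ) * S⁻¹ * K⁻¹) * B₂ := by
        simp only [mul_assoc]
      rw [this, key]
    rw [hR, mul_zero]
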